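/- For 1 ≤ i ≤ 2n, one has v_i = ρ_i ρ_{2n}^{-1} in the affine Weyl group of type C_n^{(1)}, where ρ_i = s_{i-1}⋯s_1 s_0 for 1 ≤ i ≤ n, ρ_i = s_{2n-i+1}⋯s_{n-1}s_n s_{n-1}⋯s_1 s_0 for n+1 ≤ i ≤ 2n, and v_i is defined by v_i = s_i⋯s_{n-1}s_n s_{n-1}⋯s_2 s_1 for 1 ≤ i ≤ n, v_i = s_{2n-i}⋯s_2 s_1 for n+1 ≤ i ≤ 2n-1, v_{2n} = 1. -/

import Mathlib

/-- The Coxeter matrix of type `C_n^{(1)}` on `Fin (n+1)` (vertex `i` is `s_i`). -/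
def cMatAf (n : ℕ) : CoxeterMatrix (Fin (n + 1)) where
  M i j :=
    if i = j then 1
    else if (i : ℕ) + 1 = j ∨ (j : ℕ) + 1 = i then
      (if (i : ℕ) + (j : ℕ) = 1 ∨ (i : ℕ) + (j : ℕ) = 2 * n - 1 then 4 else 3)
    else 2
  isSymm := by
    ext i j
    simp only [Matrix.transpose_apply, Matrix.transpose, Matrix.of_apply]
    rcases eq_or_ne i j with h | h
    · simp [h]
    · simp only [if_neg h, if_neg (Ne.symm h)]
      by_cases h1 : (i : ℕ) + 1 = j ∨ (j : ℕ) + 1 = i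
      · simp [h1, h1.symm, Nat.add_comm]
      · have h2 : ¬((j : ℕ) + 1 = i ∨ (i : ℕ) + 1 = j) := fun hh => h1 hh.symm
        simp [h1, h2]
  diagonal i := by simp
  off_diagonal i j h := by
    simp only [if_neg h]
    split_ifs <;> omega

/-- The affine Coxeter system of type `C_n^{(1)}`. -/
noncomputable def csAf (n : ℕ) : CoxeterSystem (cMatAf n) (cMatAf n).Group :=
  (cMatAf n).toCoxeterSystem

/-- Index conversion for the affine system (labels `0,…,n`). -/
def idxA (n : ℕ) (i : ℕ) : Fin (n + 1) := ⟨i % (n + 1), Nat.mod_lt _ (Nat.succ_pos n)⟩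

/-- Reduced word of `v_i`. -/
def vword (n i : ℕ) : List ℕ :=
  if i ≤ n then List.range' i (n - i + 1) ++ (List.range' 1 (n - 1)).reverse
  else (List.range' 1 (2 * n - i)).reverse

/-- Word of `u_k = s_{n+1-k} ⋯ s_{n-1} s_n`. -/
def uwordC (n k : ℕ) : List ℕ := List.range' (n + 1 - k) k

/-- Word of `ρ_i`. -/
def rhoWord (n i : ℕ) : List ℕ :=
  if i ≤ n then (List.range i).reverse
  else List.range' (2 * n - i + 1) (i - n) ++ (List.range n).reverse

/-- The set `𝒫^n_C`: partitions with parts in `(0, 2n]`, parts `< n` strictly decreasing. -/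
def PCset (n : ℕ) : Set (List ℕ) :=
  {L | L.Chain' (fun a b => b ≤ a ∧ (a < n → b < a)) ∧ ∀ x ∈ L, 0 < x ∧ x ≤ 2 * n}

/-- The set `𝒮𝒫(n)` of strict partitions with parts at most `n`. -/
def SPset (n : ℕ) : Set (List ℕ) :=
  {L | L.Chain' (fun a b => b < a) ∧ ∀ x ∈ L, 0 < x ∧ x ≤ n}

/-- `λ ↦ λ^* = (n+1-λ_l, …, n+1-λ_1)`. -/
def starSP (n : ℕ) (L : List ℕ) : List ℕ := (L.map (fun k => n + 1 - k)).reverse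


private lemma P_append (n : ℕ) (l1 l2 : List ℕ) :
    (csAf n).wordProd ((l1 ++ l2).map (idxA n)) =
      (csAf n).wordProd (l1.map (idxA n)) * (csAf n).wordProd (l2.map (idxA n)) := by
  rw [List.map_append, CoxeterSystem.wordProd_append]

private lemma P_rev (n : ℕ) (l : List ℕ) :
    (csAf n).wordProd (l.reverse.map (idxA n)) =
      ((csAf n).wordProd (l.map (idxA n)))⁻¹ := by
  rw [List.map_reverse, CoxeterSystem.wordProd_reverse]

private lemma range'_app (s m k : ℕ) :
    List.range' s m ++ List.range' (s + m) k = List.range' s (m + k) := by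
  have h : List.range' s m 1 ++ List.range' (s + 1 * m) k 1 = List.range' s (m + k) 1 :=
    List.range'_append
  rw [Nat.one_mul] at h
  exact h

/-- `v_i = ρ_i ρ_{2n}⁻¹` in the affine Weyl group of type `C_n^{(1)}`. -/
theorem stmt2 (n i : ℕ) (hn : 2 ≤ n) (h1 : 1 ≤ i) (h2 : i ≤ 2 * n) :
    (csAf n).wordProd ((vword n i).map (idxA n))
      = (csAf n).wordProd ((rhoWord n i).map (idxA n)) *
        ((csAf n).wordProd ((rhoWord n (2 * n)).map (idxA n)))⁻¹ := by
  rw [eq_mul_inv_iff_mul_eq]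
  have h2n : ¬ (2 * n ≤ n) := by omega
  have hrho2n : rhoWord n (2 * n) = List.range' 1 n ++ (List.range n).reverse := by
    rw [rhoWord, if_neg h2n, show 2 * n - 2 * n + 1 = 1 by omega, show 2 * n - n = n by omega]
  by_cases hi : i ≤ n
  · have e1 : List.range' i (n - i + 1) = List.range' i (n - i) ++ [n] := by
      have h : List.range' i (n - i + 1) = List.range' i (n - i) ++ [i + 1 * (n - i)] :=
        List.range'_concat
      rwa [Nat.one_mul, show i + (n - i) = n by omega] at h
    have e2 : List.range' 1 n = List.range' 1 (n - 1) ++ [n] := by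
      have h : List.range' 1 (n - 1 + 1) = List.range' 1 (n - 1) ++ [1 + 1 * (n - 1)] :=
        List.range'_concat
      rwa [Nat.one_mul, show 1 + (n - 1) = n by omega, show n - 1 + 1 = n by omega] at h
    have e3 : List.range n = List.range' 0 i ++ List.range' i (n - i) := by
      have h := range'_app 0 i (n - i)
      rw [Nat.zero_add, show i + (n - i) = n by omega] at h
      rw [List.range_eq_range', ← h]
    rw [hrho2n, vword, if_pos hi, rhoWord, if_pos hi, e1, e2, e3, List.reverse_append,
      List.range_eq_range']
    simp only [P_append, P_rev]
    set A := (csAf n).wordProd ((List.range' i (n - i)).map (idxA n))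
    set N := (csAf n).wordProd ([n].map (idxA n)) with hNdef
    set B := (csAf n).wordProd ((List.range' 1 (n - 1)).map (idxA n))
    set C := (csAf n).wordProd ((List.range' 0 i).map (idxA n))
    have hN : N * N = 1 := by
      rw [hNdef]
      simp only [List.map_cons, List.map_nil, CoxeterSystem.wordProd_cons,
        CoxeterSystem.wordProd_nil, mul_one]
      exact (csAf n).simple_mul_simple_self _
    have hN2 : ∀ x : (cMatAf n).Group, N * (N * x) = x := by
      intro x; rw [← mul_assoc, hN, one_mul]
    simp only [mul_assoc]
    rw [inv_mul_cancel_left, hN2, mul_inv_cancel_left]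
  · have e4 : List.range' 1 n
        = List.range' 1 (2 * n - i) ++ List.range' (2 * n - i + 1) (i - n) := by
      have h := range'_app 1 (2 * n - i) (i - n)
      rw [show 1 + (2 * n - i) = 2 * n - i + 1 by omega,
        show 2 * n - i + (i - n) = n by omega] at h
      exact h.symm
    rw [hrho2n, vword, if_neg hi, rhoWord, if_neg hi, e4]
    simp only [P_append, P_rev]
    simp only [mul_assoc]
    rw [inv_mul_cancel_left]
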